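/- Let n ≥ 2 be an integer, let Ω ⊂ ℝⁿ be a compact set with nonempty interior, and let α ≥ n + 1. Then the function V_Ω^{(α)}(x) = ∫_Ω |x − y|^{α−n} dy attains its minimum over ℝⁿ at exactly one point; i.e. Ω has a unique r^{α−n}-center. -/

import Mathlib

open MeasureTheory

section Aux

variable {n : ℕ}

local notation "E" => EuclideanSpace ℝ (Fin n)

lemma aux_rpow_cont (p : ℝ) (hp : 0 < p) : Continuous (fun t : ℝ => t ^ p) :=
  continuous_iff_continuousAt.2 fun t => Real.continuousAt_rpow_const t p (Or.inr hp.le)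

lemma aux_cont (p : ℝ) (hp : 0 < p) (x : E) :
    Continuous (fun y : E => ‖x - y‖ ^ p) :=
  (aux_rpow_cont p hp).comp ((continuous_const.sub continuous_id).norm)

lemma aux_cont' (p : ℝ) (hp : 0 < p) (y : E) :
    Continuous (fun x : E => ‖x - y‖ ^ p) :=
  (aux_rpow_cont p hp).comp ((continuous_id.sub continuous_const).norm)

lemma aux_pt (p : ℝ) (hp1 : 1 ≤ p) (z1 z2 y : E) :
    ‖(1/2 : ℝ) • z1 + (1/2 : ℝ) • z2 - y‖ ^ p
      ≤ 1/2 * ‖z1 - y‖ ^ p + 1/2 * ‖z2 - y‖ ^ p := by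
  have hp0 : (0:ℝ) ≤ p := by linarith
  have hrw : (1/2:ℝ) • z1 + (1/2:ℝ) • z2 - y
      = (1/2:ℝ) • (z1 - y) + (1/2:ℝ) • (z2 - y) := by module
  have h1 : ‖(1/2:ℝ) • z1 + (1/2:ℝ) • z2 - y‖
      ≤ 1/2 * ‖z1 - y‖ + 1/2 * ‖z2 - y‖ := by
    rw [hrw]
    refine (norm_add_le _ _).trans_eq ?_
    rw [norm_smul, norm_smul]
    norm_num
  have h2 := (convexOn_rpow hp1).2 (Set.mem_Ici.2 (norm_nonneg (z1 - y)))
    (Set.mem_Ici.2 (norm_nonneg (z2 - y))) (by norm_num : (0:ℝ) ≤ 1/2)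
    (by norm_num : (0:ℝ) ≤ 1/2) (by norm_num)
  simp only [smul_eq_mul] at h2
  calc ‖(1/2:ℝ) • z1 + (1/2:ℝ) • z2 - y‖ ^ p
      ≤ (1/2 * ‖z1 - y‖ + 1/2 * ‖z2 - y‖) ^ p :=
        Real.rpow_le_rpow (norm_nonneg _) h1 hp0
    _ ≤ 1/2 * ‖z1 - y‖ ^ p + 1/2 * ‖z2 - y‖ ^ p := h2

lemma aux_pt_strict (p : ℝ) (hp1 : 1 ≤ p) (z1 z2 y : E) (hz : z1 ≠ z2)
    (hy : y ∉ (affineSpan ℝ {z1, z2} : Set E)) :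
    ‖(1/2 : ℝ) • z1 + (1/2 : ℝ) • z2 - y‖ ^ p
      < 1/2 * ‖z1 - y‖ ^ p + 1/2 * ‖z2 - y‖ ^ p := by
  have hp0 : (0:ℝ) < p := by linarith
  have hrw : (1/2:ℝ) • z1 + (1/2:ℝ) • z2 - y
      = (1/2:ℝ) • (z1 - y) + (1/2:ℝ) • (z2 - y) := by module
  have hns : ¬ SameRay ℝ ((1/2:ℝ) • (z1 - y)) ((1/2:ℝ) • (z2 - y)) := by
    intro hsr
    rcases eq_or_ne ((1/2:ℝ) • (z1 - y)) 0 with h0 | h0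
    · have h1 : z1 = y := by
        have := smul_eq_zero.1 h0
        simpa [sub_eq_zero] using this
      exact hy (h1 ▸ left_mem_affineSpan_pair ℝ z1 z2)
    rcases eq_or_ne ((1/2:ℝ) • (z2 - y)) 0 with h0' | h0'
    · have h2 : z2 = y := by
        have := smul_eq_zero.1 h0'
        simpa [sub_eq_zero] using this
      exact hy (h2 ▸ right_mem_affineSpan_pair ℝ z1 z2)
    obtain ⟨r1, r2, hr1, hr2, heq⟩ := hsr.exists_pos h0 h0'
    rw [smul_smul, smul_smul] at heq
    set s1 := r1 * (1/2) with hs1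
    set s2 := r2 * (1/2) with hs2
    have hs1p : 0 < s1 := by positivity
    have hs2p : 0 < s2 := by positivity
    rcases eq_or_ne s1 s2 with hss | hss
    · apply hz
      rw [hss] at heq
      have := smul_right_injective E hs2p.ne' heq
      exact sub_left_injective this
    · apply hy
      have hne : s1 - s2 ≠ 0 := sub_ne_zero.2 hss
      have hkey : y = (s1 - s2)⁻¹ • (s1 • z1 - s2 • z2) := by
        have h3 : (s1 - s2) • y = s1 • z1 - s2 • z2 := by
          have h4 : s1 • z1 - s1 • y = s2 • z2 - s2 • y := by
            simpa [smul_sub] using heq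
          linear_combination (norm := module) -h4
        rw [← h3, smul_smul, inv_mul_cancel₀ hne, one_smul]
      have hmem := AffineMap.lineMap_mem_affineSpan_pair (k := ℝ) (s2/(s2 - s1)) z1 z2
      have heq2 : AffineMap.lineMap z1 z2 (s2/(s2 - s1)) = y := by
        rw [hkey, AffineMap.lineMap_apply, vsub_eq_sub, vadd_eq_add, div_eq_mul_inv]
        have hne2 : s2 - s1 ≠ 0 := sub_ne_zero.2 (Ne.symm hss)
        match_scalars
        · field_simp
          ring
        · field_simp
          ring
      rw [heq2] at hmem
      exact hmem
  have h1 : ‖(1/2:ℝ) • z1 + (1/2:ℝ) • z2 - y‖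
      < 1/2 * ‖z1 - y‖ + 1/2 * ‖z2 - y‖ := by
    rw [hrw]
    refine (norm_add_lt_of_not_sameRay hns).trans_eq ?_
    rw [norm_smul, norm_smul]
    norm_num
  have h2 := (convexOn_rpow hp1).2 (Set.mem_Ici.2 (norm_nonneg (z1 - y)))
    (Set.mem_Ici.2 (norm_nonneg (z2 - y))) (by norm_num : (0:ℝ) ≤ 1/2)
    (by norm_num : (0:ℝ) ≤ 1/2) (by norm_num)
  simp only [smul_eq_mul] at h2
  calc ‖(1/2:ℝ) • z1 + (1/2:ℝ) • z2 - y‖ ^ p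
      < (1/2 * ‖z1 - y‖ + 1/2 * ‖z2 - y‖) ^ p :=
        Real.rpow_lt_rpow (norm_nonneg _) h1 hp0
    _ ≤ 1/2 * ‖z1 - y‖ ^ p + 1/2 * ‖z2 - y‖ ^ p := h2

lemma aux_span_null (hn : 2 ≤ n) (z1 z2 : E) (hz : z1 ≠ z2) :
    volume (affineSpan ℝ ({z1, z2} : Set E) : Set E) = 0 := by
  apply Measure.addHaar_affineSubspace
  intro htop
  have hdir : (affineSpan ℝ ({z1, z2} : Set E)).direction = ⊤ := by
    rw [htop]; exact AffineSubspace.direction_top ℝ _ _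
  rw [direction_affineSpan, vectorSpan_pair] at hdir
  have h1 : Module.finrank ℝ (ℝ ∙ (z1 -ᵥ z2)) = 1 :=
    finrank_span_singleton (by simpa [vsub_eq_sub, sub_eq_zero] using hz)
  rw [hdir] at h1
  rw [finrank_top] at h1
  have : Module.finrank ℝ E = n := finrank_euclideanSpace_fin
  omega

end Aux

set_option maxHeartbeats 1000000 in
theorem stmt_19 (n : ℕ) (hn : 2 ≤ n) (Ω : Set (EuclideanSpace ℝ (Fin n)))
    (hc : IsCompact Ω) (hint : (interior Ω).Nonempty) (α : ℝ) (hα : (n : ℝ) + 1 ≤ α) :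
    ∃! z : EuclideanSpace ℝ (Fin n),
      ∀ x : EuclideanSpace ℝ (Fin n),
        (∫ y in Ω, ‖z - y‖ ^ (α - n)) ≤ (∫ y in Ω, ‖x - y‖ ^ (α - n)) := by
  set p : ℝ := α - n with hpdef
  have hp1 : 1 ≤ p := by rw [hpdef]; linarith
  have hp0 : 0 < p := by linarith
  set F : EuclideanSpace ℝ (Fin n) → ℝ := fun x => ∫ y in Ω, ‖x - y‖ ^ p with hFdef
  have hΩm : MeasurableSet Ω := hc.isClosed.measurableSet
  have hInt : ∀ x, IntegrableOn (fun y => ‖x - y‖ ^ p) Ω volume := fun x =>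
    (aux_cont p hp0 x).continuousOn.integrableOn_compact hc
  obtain ⟨R, hR⟩ := hc.isBounded.subset_closedBall 0
  have hμpos : 0 < volume Ω :=
    lt_of_lt_of_le (isOpen_interior.measure_pos volume hint) (measure_mono interior_subset)
  have hμfin : volume Ω < ⊤ := hc.measure_lt_top
  set m : ℝ := (volume Ω).toReal with hmdef
  have hm : 0 < m := ENNReal.toReal_pos hμpos.ne' hμfin.ne
  -- continuity of F
  have hFc : Continuous F := by
    rw [continuous_iff_continuousAt]
    intro x₀
    apply continuousAt_of_dominated (bound := fun _ => (‖x₀‖ + 1 + R) ^ p)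
    · exact Filter.Eventually.of_forall fun x => (aux_cont p hp0 x).aestronglyMeasurable
    · filter_upwards [Metric.ball_mem_nhds x₀ one_pos] with x hx
      filter_upwards [ae_restrict_mem hΩm] with y hy
      have h1 : ‖x - y‖ ≤ ‖x₀‖ + 1 + R := by
        have hxb : ‖x - x₀‖ ≤ 1 := by
          have := mem_ball_iff_norm.1 hx
          linarith
        have hyb : ‖y‖ ≤ R := mem_closedBall_zero_iff.1 (hR hy)
        calc ‖x - y‖ = ‖(x - x₀) + (x₀ - y)‖ := by rw [sub_add_sub_cancel]
          _ ≤ ‖x - x₀‖ + ‖x₀ - y‖ := norm_add_le _ _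
          _ ≤ ‖x - x₀‖ + (‖x₀‖ + ‖y‖) := by
              have := norm_sub_le x₀ y
              linarith
          _ ≤ ‖x₀‖ + 1 + R := by linarith
      have h2 : ‖x - y‖ ^ p ≤ (‖x₀‖ + 1 + R) ^ p :=
        Real.rpow_le_rpow (norm_nonneg _) h1 hp0.le
      have h3 : ‖‖x - y‖ ^ p‖ = ‖x - y‖ ^ p :=
        Real.norm_of_nonneg (Real.rpow_nonneg (norm_nonneg _) p)
      rw [h3]; exact h2
    · exact integrableOn_const hμfin.ne
    · filter_upwards [ae_restrict_mem hΩm] with y _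
      exact (aux_cont' p hp0 y).continuousAt
  -- lower bound
  have hlb : ∀ x : EuclideanSpace ℝ (Fin n), R ≤ ‖x‖ → (‖x‖ - R) ^ p * m ≤ F x := by
    intro x hx
    have hle : ∀ y ∈ Ω, (‖x‖ - R) ^ p ≤ ‖x - y‖ ^ p := by
      intro y hy
      apply Real.rpow_le_rpow (by linarith) _ hp0.le
      have hyb : ‖y‖ ≤ R := mem_closedBall_zero_iff.1 (hR hy)
      have := norm_sub_norm_le x y
      linarith
    have := setIntegral_mono_on (integrableOn_const hμfin.ne) (hInt x) hΩm hle
    simpa [setIntegral_const, hmdef, mul_comm, Measure.real] using this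
  -- existence of a minimizer
  set R' : ℝ := R + 1 + |F 0| / m with hR'def
  have hRnn : 0 ≤ R := by
    obtain ⟨y, hy⟩ := hint
    have := mem_closedBall_zero_iff.1 (hR (interior_subset hy))
    exact (norm_nonneg y).trans this
  have hR'nn : 0 ≤ R' := by
    have := div_nonneg (abs_nonneg (F 0)) hm.le
    rw [hR'def]; linarith
  obtain ⟨z, hzK, hzmin⟩ := (isCompact_closedBall (0 : EuclideanSpace ℝ (Fin n)) R').exists_isMinOn
    ⟨0, Metric.mem_closedBall_self hR'nn⟩ hFc.continuousOn
  have hzglob : ∀ x, F z ≤ F x := by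
    intro x
    by_cases hx : x ∈ Metric.closedBall (0 : EuclideanSpace ℝ (Fin n)) R'
    · exact hzmin hx
    · have hxR : R' < ‖x‖ := by
        simp only [Metric.mem_closedBall, dist_zero_right, not_le] at hx
        exact hx
      have hxR2 : R ≤ ‖x‖ := by
        rw [hR'def] at hxR
        have := div_nonneg (abs_nonneg (F 0)) hm.le
        linarith
      have h1 : (‖x‖ - R) ^ p * m ≤ F x := hlb x hxR2
      have h2 : 1 + |F 0| / m < ‖x‖ - R := by
        rw [hR'def] at hxR; linarith
      have h3 : ‖x‖ - R ≤ (‖x‖ - R) ^ p := by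
        have hb : 1 ≤ ‖x‖ - R := by
          have := div_nonneg (abs_nonneg (F 0)) hm.le
          linarith
        calc ‖x‖ - R = (‖x‖ - R) ^ (1:ℝ) := (Real.rpow_one _).symm
          _ ≤ (‖x‖ - R) ^ p := Real.rpow_le_rpow_of_exponent_le hb hp1
      have h4 : F 0 < F x := by
        have h5 : (1 + |F 0| / m) * m < (‖x‖ - R) ^ p * m := by
          apply mul_lt_mul_of_pos_right _ hm
          linarith
        have h6 : (1 + |F 0| / m) * m = m + |F 0| := by
          field_simp
        have h7 : F 0 ≤ |F 0| := le_abs_self _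
        nlinarith
      exact le_of_lt (lt_of_le_of_lt (hzmin (Metric.mem_closedBall_self hR'nn)) h4)
  -- strict convexity at midpoints gives uniqueness
  have hstrict : ∀ z1 z2 : EuclideanSpace ℝ (Fin n), z1 ≠ z2 →
      F ((1/2:ℝ) • z1 + (1/2:ℝ) • z2) < 1/2 * F z1 + 1/2 * F z2 := by
    intro z1 z2 hz12
    set w := (1/2:ℝ) • z1 + (1/2:ℝ) • z2 with hwdef
    set g : EuclideanSpace ℝ (Fin n) → ℝ :=
      fun y => 1/2 * ‖z1 - y‖ ^ p + 1/2 * ‖z2 - y‖ ^ p - ‖w - y‖ ^ p with hgdef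
    have hgint : IntegrableOn g Ω volume :=
      (((hInt z1).const_mul (1/2)).add ((hInt z2).const_mul (1/2))).sub (hInt w)
    have hg0 : ∀ y, 0 ≤ g y := fun y => sub_nonneg.2 (aux_pt p hp1 z1 z2 y)
    set N : Set (EuclideanSpace ℝ (Fin n)) :=
      ↑(affineSpan ℝ ({z1, z2} : Set (EuclideanSpace ℝ (Fin n)))) with hNdef
    have hNnull : volume N = 0 := aux_span_null hn z1 z2 hz12
    have hgpos : ∀ y ∉ N, 0 < g y := fun y hy =>
      sub_pos.2 (aux_pt_strict p hp1 z1 z2 y hz12 hy)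
    have hpos : 0 < ∫ y in Ω, g y := by
      rcases (integral_nonneg hg0 : (0:ℝ) ≤ ∫ y in Ω, g y).lt_or_eq with h | h
      · exact h
      exfalso
      have hzero : g =ᵐ[volume.restrict Ω] 0 :=
        (integral_eq_zero_iff_of_nonneg_ae (Filter.Eventually.of_forall hg0) hgint).1 h.symm
      have hsub : Ω \ N ⊆ {y | g y ≠ 0} := by
        intro y hy
        exact (hgpos y hy.2).ne'
      have h1 : volume.restrict Ω {y | g y ≠ 0} = 0 := by
        have := hzero
        rw [Filter.EventuallyEq, ae_iff] at this
        simpa using this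
      have h2 : volume.restrict Ω (Ω \ N) = 0 :=
        measure_mono_null hsub h1
      rw [Measure.restrict_apply' hΩm] at h2
      have h3 : (Ω \ N) ∩ Ω = Ω \ N := Set.inter_eq_left.2 Set.diff_subset
      rw [h3] at h2
      have h4 : volume (Ω \ N) = volume Ω := measure_diff_null hNnull
      rw [h4] at h2
      exact hμpos.ne' h2
    have heq : ∫ y in Ω, g y = 1/2 * F z1 + 1/2 * F z2 - F w := by
      have e1 : ∫ y in Ω, g y
          = (∫ y in Ω, (1/2 * ‖z1 - y‖ ^ p + 1/2 * ‖z2 - y‖ ^ p)) - ∫ y in Ω, ‖w - y‖ ^ p :=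
        integral_sub (((hInt z1).const_mul (1/2)).add ((hInt z2).const_mul (1/2))) (hInt w)
      have e2 : ∫ y in Ω, (1/2 * ‖z1 - y‖ ^ p + 1/2 * ‖z2 - y‖ ^ p)
          = (∫ y in Ω, 1/2 * ‖z1 - y‖ ^ p) + ∫ y in Ω, 1/2 * ‖z2 - y‖ ^ p :=
        integral_add ((hInt z1).const_mul (1/2)) ((hInt z2).const_mul (1/2))
      rw [e1, e2, MeasureTheory.integral_const_mul, MeasureTheory.integral_const_mul]
    rw [heq] at hpos
    linarith
  refine ⟨z, hzglob, ?_⟩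
  intro y hy
  by_contra hne
  have h1 : F y = F z := le_antisymm (hy z) (hzglob y)
  have h2 := hstrict y z hne
  rw [h1] at h2
  have h3 : F ((1/2:ℝ) • y + (1/2:ℝ) • z) < F z := by linarith
  exact absurd (hzglob _) (not_le.2 h3)
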